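/- The (n+1)×(n+1) Krawtchouk matrix K with entries K_{ji} = K_j(i;n) satisfies K² = 2^n · I; in particular K is non-singular. -/

import Mathlib

open Finset

/-- Integer binomial coefficient with convention C(a,b)=0 unless 0 ≤ b ≤ a. -/
def intChoose (a b : ℤ) : ℤ :=
  if 0 ≤ a ∧ 0 ≤ b then (a.toNat.choose b.toNat : ℤ) else 0

/-- Krawtchouk polynomial K_j(i;n) = Σ_{k=0}^{j} (-1)^k C(i,k) C(n-i,j-k),
with the convention K_j(i;n)=0 if j ∉ [0,n] or i ∉ [0,n]. -/
def kraw (n : ℕ) (j i : ℤ) : ℤ :=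
  ∑ k ∈ Finset.range (j.toNat + 1),
    (-1) ^ k * intChoose i k * intChoose ((n : ℤ) - i) (j - k)

namespace KrawAux

open Polynomial

lemma coeff_one_sub_X_pow (m k : ℕ) :
    ((1 - X : Polynomial ℤ) ^ m).coeff k = (-1)^k * m.choose k := by
  have h : (1 - X : Polynomial ℤ) ^ m = ∑ l ∈ range (m+1),
      (((-1)^l * m.choose l : ℤ)) • (X : Polynomial ℤ)^l := by
    rw [show (1 - X : Polynomial ℤ) = -X + 1 by ring, add_pow]
    refine Finset.sum_congr rfl fun l hl => ?_
    rw [neg_pow]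
    simp [smul_eq_mul]
    ring
  rw [h, finset_sum_coeff]
  simp only [coeff_smul, coeff_X_pow, smul_eq_mul, mul_ite, mul_one, mul_zero]
  rw [Finset.sum_ite_eq (range (m+1)) k]
  by_cases hk : k ≤ m
  · simp [Nat.lt_succ_iff.mpr hk]
  · simp [hk, Nat.lt_succ_iff]
    exact Nat.choose_eq_zero_of_lt (by omega)

noncomputable def P (n m : ℕ) : Polynomial ℤ := (1 - X) ^ m * (1 + X) ^ (n - m)
noncomputable def PQ (n m : ℕ) : Polynomial ℚ := (1 - X) ^ m * (1 + X) ^ (n - m)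

lemma kraw_eq_coeff (n i j : ℕ) (hi : i ≤ n) :
    kraw n (j : ℕ) (i : ℕ) = (P n i).coeff j := by
  rw [P, kraw, coeff_mul]
  rw [Finset.Nat.sum_antidiagonal_eq_sum_range_succ_mk]
  simp only [Int.toNat_natCast]
  refine Finset.sum_congr rfl fun k hk => ?_
  have hk' : k ≤ j := Nat.lt_succ_iff.mp (Finset.mem_range.mp hk)
  rw [coeff_one_sub_X_pow, coeff_one_add_X_pow]
  have h1 : intChoose (i : ℤ) (k : ℤ) = (i.choose k : ℤ) := by
    simp [intChoose]
  have h2 : intChoose ((n : ℤ) - i) ((j : ℤ) - k) = ((n - i).choose (j - k) : ℤ) := by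
    rw [intChoose, if_pos ⟨by omega, by omega⟩,
      show ((n : ℤ) - i).toNat = n - i by omega, show ((j : ℤ) - k).toNat = j - k by omega]
  rw [h1, h2]

lemma PQ_natDegree_lt (n m : ℕ) (hm : m ≤ n) : (PQ n m).natDegree < n + 1 := by
  have h := natDegree_mul_le (p := ((1 - X : Polynomial ℚ)) ^ m) (q := (1 + X : Polynomial ℚ) ^ (n - m))
  have h1 : (((1 - X : Polynomial ℚ)) ^ m).natDegree ≤ m := by
    refine (natDegree_pow_le).trans ?_
    have : (1 - X : Polynomial ℚ).natDegree ≤ 1 := by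
      compute_degree
    nlinarith [this]
  have h2 : (((1 + X : Polynomial ℚ)) ^ (n - m)).natDegree ≤ n - m := by
    refine (natDegree_pow_le).trans ?_
    have : (1 + X : Polynomial ℚ).natDegree ≤ 1 := by compute_degree
    nlinarith [this]
  rw [PQ]
  omega

lemma keyQ (n i : ℕ) (hi : i ≤ n) :
    ∑ l ∈ range (n+1), ((P n i).coeff l : ℚ) • PQ n l = (2^n : ℚ) • (X : Polynomial ℚ)^i := by
  have hmap : ∀ m, (P n m).map (Int.castRingHom ℚ) = PQ n m := by
    intro m; simp [P, PQ, Polynomial.map_mul, Polynomial.map_pow]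
  have hcoeff : ∀ l, ((P n i).coeff l : ℚ) = (PQ n i).coeff l := by
    intro l; rw [← hmap, coeff_map]; rfl
  apply Polynomial.eq_of_infinite_eval_eq
  apply Set.Infinite.mono (s := {x : ℚ | x ≠ -1})
  swap
  · exact Set.Finite.infinite_compl (Set.finite_singleton (-1))
  intro x hx
  have h1 : (1 : ℚ) + x ≠ 0 := fun h => hx (by linarith)
  set t : ℚ := (1 - x) / (1 + x) with ht
  obtain ⟨m, rfl⟩ : ∃ m, n = i + m := ⟨n - i, by omega⟩
  simp only [Set.mem_setOf_eq, eval_smul, eval_finset_sum, eval_pow, eval_X, smul_eq_mul]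
  have step1 : ∀ l ∈ range (i + m + 1),
      eval x (PQ (i + m) l) = (1 + x)^(i + m) * t^l := by
    intro l hl
    have hl' : l ≤ i + m := Nat.lt_succ_iff.mp (mem_range.mp hl)
    obtain ⟨k, hk⟩ : ∃ k, i + m = l + k := ⟨i + m - l, by omega⟩
    rw [PQ]
    simp only [eval_mul, eval_pow, eval_sub, eval_add, eval_one, eval_X, hk]
    have : l + k - l = k := by omega
    rw [this, ht, div_pow, pow_add]
    field_simp
  rw [Finset.sum_congr rfl (fun l hl => by rw [step1 l hl])]
  rw [show ∀ f : ℕ → ℚ, ∑ l ∈ range (i+m+1), ((P (i+m) i).coeff l : ℚ) * ((1+x)^(i+m) * f l)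
      = (1+x)^(i+m) * ∑ l ∈ range (i+m+1), ((P (i+m) i).coeff l : ℚ) * f l
    from fun f => by rw [Finset.mul_sum]; exact Finset.sum_congr rfl fun l _ => by ring]
  have step2 : ∑ l ∈ range (i+m+1), ((P (i+m) i).coeff l : ℚ) * t^l = eval t (PQ (i+m) i) := by
    rw [eval_eq_sum_range' (PQ_natDegree_lt (i+m) i (by omega))]
    exact Finset.sum_congr rfl fun l _ => by rw [hcoeff]
  rw [step2]
  have step3 : eval t (PQ (i+m) i) = (1 - t)^i * (1 + t)^m := by
    have : i + m - i = m := by omega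
    simp [PQ, this]
  rw [step3, ht]
  have h1t : (1 : ℚ) - (1 - x)/(1 + x) = 2*x/(1+x) := by field_simp; ring
  have h2t : (1 : ℚ) + (1 - x)/(1 + x) = 2/(1+x) := by field_simp; ring
  rw [h1t, h2t, div_pow, div_pow, pow_add]
  field_simp
  ring

lemma key (n i : ℕ) (hi : i ≤ n) :
    ∑ l ∈ range (n+1), (P n i).coeff l • P n l = (2^n : ℤ) • (X : Polynomial ℤ)^i := by
  have hmap : ∀ m, (P n m).map (Int.castRingHom ℚ) = PQ n m := by
    intro m; simp [P, PQ, Polynomial.map_mul, Polynomial.map_pow]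
  apply Polynomial.map_injective (Int.castRingHom ℚ) (by exact_mod_cast Int.cast_injective)
  rw [Polynomial.map_sum]
  have : ∀ l, ((P n i).coeff l • P n l).map (Int.castRingHom ℚ)
      = ((P n i).coeff l : ℚ) • PQ n l := by
    intro l
    rw [zsmul_eq_mul, Polynomial.map_mul, hmap]
    push_cast
    rw [smul_eq_C_mul]
    simp
  rw [Finset.sum_congr rfl fun l _ => this l, keyQ n i hi]
  rw [zsmul_eq_mul, Polynomial.map_mul, Polynomial.map_pow, Polynomial.map_X,
    Polynomial.map_intCast, smul_eq_C_mul]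
  push_cast
  rw [show ((2 : Polynomial ℚ)) = Polynomial.C 2 from (Polynomial.C_eq_natCast 2).symm, Polynomial.C_pow]

end KrawAux

/-- The (n+1)×(n+1) Krawtchouk matrix K with entries K_{ji} = K_j(i;n) satisfies
K² = 2^n · I; in particular K is non-singular. -/
theorem krawtchouk_matrix_sq (n : ℕ) :
    (Matrix.of fun j i : Fin (n + 1) => kraw n (j : ℕ) (i : ℕ)) *
        (Matrix.of fun j i : Fin (n + 1) => kraw n (j : ℕ) (i : ℕ)) =
      (2 ^ n : ℤ) • (1 : Matrix (Fin (n + 1)) (Fin (n + 1)) ℤ) ∧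
    (Matrix.of fun j i : Fin (n + 1) => kraw n (j : ℕ) (i : ℕ)).det ≠ 0 := by
  open KrawAux Polynomial in
  have hsq : (Matrix.of fun j i : Fin (n + 1) => kraw n (j : ℕ) (i : ℕ)) *
        (Matrix.of fun j i : Fin (n + 1) => kraw n (j : ℕ) (i : ℕ)) =
      (2 ^ n : ℤ) • (1 : Matrix (Fin (n + 1)) (Fin (n + 1)) ℤ) := by
    ext j i
    rw [Matrix.mul_apply]
    simp only [Matrix.of_apply, Matrix.smul_apply, Matrix.one_apply, smul_eq_mul]
    have hi : (i : ℕ) ≤ n := by omega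
    calc ∑ l : Fin (n+1), kraw n (j : ℕ) (l : ℕ) * kraw n (l : ℕ) (i : ℕ)
        = ∑ l ∈ range (n+1), (P n i).coeff l * (P n l).coeff j := by
          rw [Fin.sum_univ_eq_sum_range (fun l => kraw n (j:ℕ) l * kraw n l (i:ℕ))]
          refine Finset.sum_congr rfl fun l hl => ?_
          have hl' : l ≤ n := Nat.lt_succ_iff.mp (Finset.mem_range.mp hl)
          rw [kraw_eq_coeff n l j hl', kraw_eq_coeff n i l hi]
          ring
      _ = (∑ l ∈ range (n+1), (P n i).coeff l • P n l).coeff j := by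
          rw [Polynomial.finset_sum_coeff]
          exact Finset.sum_congr rfl fun l _ => by rw [Polynomial.coeff_smul, smul_eq_mul]
      _ = ((2^n : ℤ) • (X : Polynomial ℤ)^(i : ℕ)).coeff j := by rw [key n i hi]
      _ = 2^n * (if j = i then 1 else 0) := by
          rw [Polynomial.coeff_smul, Polynomial.coeff_X_pow, smul_eq_mul]
          congr 1
          simp [Fin.ext_iff]
  refine ⟨hsq, ?_⟩
  intro hdet
  have := congrArg Matrix.det hsq
  rw [Matrix.det_mul, hdet, Matrix.det_smul, Matrix.det_one] at this
  simp at this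
  exact absurd this (by positivity)
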